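/- Let p be differentiable on (0,∞) with p'(g) ≥ 0 for g > 0. Let μ ≥ 0 satisfy the optimality first-order conditions with ‖μ‖ > 0, and let ξ ≥ 0 satisfy the Nash-equilibrium first-order conditions with ‖ξ‖ > 0. Then the total demand at the Nash equilibrium is at least the optimal total demand: ‖μ‖ ≤ ‖ξ‖. -/
import Mathlib

open Finset Set

/-- The total demand at a Nash equilibrium is at least the
optimal total demand: `‖μ‖ ≤ ‖ξ‖`, where `μ` satisfies the optimality
first-order conditions and `ξ` the Nash-equilibrium first-order conditions. -/
theorem statement_2
    (N : ℕ) (v v' : Fin N → ℝ → ℝ) (C C' p p' : ℝ → ℝ)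
    (hv_deriv : ∀ i x, HasDerivAt (v i) (v' i x) x)
    (hv_concave : ∀ i, ConcaveOn ℝ (Ici (0 : ℝ)) (v i))
    (hv_mono : ∀ i, MonotoneOn (v i) (Ici (0 : ℝ)))
    (hv0 : ∀ i, v i 0 = 0)
    (hC_deriv : ∀ x : ℝ, 0 ≤ x → HasDerivAt C (C' x) x)
    (hC_sconvex : StrictConvexOn ℝ (Ici (0 : ℝ)) C)
    (hC0 : C 0 = 0)
    (hCpos : ∀ g : ℝ, 0 < g → 0 < C g)
    (hp : ∀ g : ℝ, 0 < g → p g = C g / g)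
    (hp_mono : MonotoneOn p (Ioi (0 : ℝ)))
    (hp_deriv : ∀ g : ℝ, 0 < g → HasDerivAt p (p' g) g)
    (hp'_nonneg : ∀ g : ℝ, 0 < g → 0 ≤ p' g)
    (hC'_eq : ∀ g : ℝ, 0 < g → C' g = p g + g * p' g)
    (μ ξ : Fin N → ℝ)
    (hμ_nonneg : ∀ i, 0 ≤ μ i) (hμ_pos : 0 < ∑ i, μ i)
    (hμ_le : ∀ i, v' i (μ i) ≤ C' (∑ j, μ j))
    (hμ_eq : ∀ i, 0 < μ i → v' i (μ i) = C' (∑ j, μ j))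
    (hξ_nonneg : ∀ i, 0 ≤ ξ i) (hξ_pos : 0 < ∑ i, ξ i)
    (hξ_le : ∀ i, v' i (ξ i) ≤ p (∑ j, ξ j) + ξ i * p' (∑ j, ξ j))
    (hξ_eq : ∀ i, 0 < ξ i → v' i (ξ i) = p (∑ j, ξ j) + ξ i * p' (∑ j, ξ j)) :
    (∑ i, μ i) ≤ ∑ i, ξ i := by
  by_contra h
  push_neg at h
  -- find i with ξ i < μ i
  obtain ⟨i, -, hi⟩ := Finset.exists_lt_of_sum_lt h
  have hμi : 0 < μ i := lt_of_le_of_lt (hξ_nonneg i) hi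
  set S := ∑ j, ξ j with hS
  set T := ∑ j, μ j with hT
  -- ξ i ≤ S
  have hξiS : ξ i ≤ S := Finset.single_le_sum (fun j _ => hξ_nonneg j) (Finset.mem_univ i)
  -- v' i is antitone on Ici 0
  have hv'_anti : v' i (μ i) ≤ v' i (ξ i) := by
    have hconv : ConvexOn ℝ (Ici (0 : ℝ)) (-(v i)) := (hv_concave i).neg
    have hd : ∀ x ∈ Ici (0 : ℝ), DifferentiableAt ℝ (-(v i)) x := fun x _ =>
      ((hv_deriv i x).neg).differentiableAt
    have hmono := hconv.monotoneOn_deriv hd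
    have h1 := hmono (Set.mem_Ici.2 (hξ_nonneg i)) (Set.mem_Ici.2 hμi.le) hi.le
    have e : ∀ x : ℝ, deriv (-(v i)) x = -(v' i x) := fun x =>
      ((hv_deriv i x).neg).deriv
    rw [e, e] at h1
    linarith
  -- C' strictly monotone on Ici 0
  have hC'_lt : C' S < C' T := by
    have hmono := hC_sconvex.strictMonoOn_deriv (fun x hx =>
      (hC_deriv x hx).differentiableAt)
    have h1 := hmono (Set.mem_Ici.2 hξ_pos.le) (Set.mem_Ici.2 hμ_pos.le) h
    rwa [(hC_deriv S hξ_pos.le).deriv, (hC_deriv T hμ_pos.le).deriv] at h1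
  have h2 : p S + ξ i * p' S ≤ C' S := by
    rw [hC'_eq S hξ_pos]
    have := hp'_nonneg S hξ_pos
    nlinarith
  have h3 := hξ_le i
  have h4 := hμ_eq i hμi
  linarith
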